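/- arXiv:2302.05509 — 3 statements merged into one kernel-verified Lean document; each statement's English description precedes it below -/
import Mathlib

section
/- Let E, F be finite sets, d ≥ 1, and A = (α_k : E → F)_{k=0}^n a tuple of injective maps with pairwise disjoint images. Let Φ be an oriented tropical Plücker vector of rank d on E. Then for every t = (t₀,…,t_n) in the standard n-simplex (t_k ≥ 0, Σ t_k = 1), the slide Φ_t^A is an oriented tropical Plücker vector of rank d on F. Moreover, when t is the k-th vertex of the simplex (t_k = 1, t_ℓ = 0 for ℓ ≠ k), one has Φ_t^A = (α_k)_*Φ. -/
open Finset

noncomputable section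

/-! ### Alternating functions and oriented tropical Plücker vectors -/

/-- A function `Φ : E^d → ℝ` is alternating. -/
def IsAlternating {E : Type*} {d : ℕ} (Φ : (Fin d → E) → ℝ) : Prop :=
  (∀ (σ : Equiv.Perm (Fin d)) (x : Fin d → E),
      Φ (x ∘ σ) = ((Equiv.Perm.sign σ : ℤ) : ℝ) * Φ x) ∧
  ∀ x : Fin d → E, ¬ Function.Injective x → Φ x = 0

/-- The `i`-th term `(-1)^i · Φ(x₁,…,x̂ᵢ,…,x_{d+1}) · Φ(xᵢ,y₁,…,y_{d-1})` of the
oriented (tropical) Plücker relation attached to tuples `X ∈ E^{d+1}`, `Y ∈ E^{d-1}`. -/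
def delTerm {E : Type*} {d n : ℕ} (hn : d = n + 1) (Φ : (Fin d → E) → ℝ)
    (X : Fin (d + 1) → E) (Y : Fin n → E) (i : Fin (d + 1)) : ℝ :=
  (-1 : ℝ) ^ (i : ℕ) * Φ (X ∘ i.succAbove) * Φ (Fin.cons (X i) Y ∘ Fin.cast hn)

/-- `Φ : E^d → ℝ` is an oriented tropical Plücker vector of rank `d` on `E`:
it is alternating, not identically zero, and for every `X ∈ E^{d+1}`, `Y ∈ E^{d-1}`
the list of terms of the Plücker relation is identically zero or its maximum absolute
value is attained both at a positive entry and at a negative entry. -/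
def IsOrientedTP {E : Type*} (d : ℕ) (Φ : (Fin d → E) → ℝ) : Prop :=
  IsAlternating Φ ∧ (∃ x, Φ x ≠ 0) ∧
  ∀ (n : ℕ) (hn : d = n + 1) (X : Fin (d + 1) → E) (Y : Fin n → E),
    (∀ i, delTerm hn Φ X Y i = 0) ∨
    ∃ ip im : Fin (d + 1),
      0 < delTerm hn Φ X Y ip ∧ delTerm hn Φ X Y im < 0 ∧
      (∀ k, |delTerm hn Φ X Y k| ≤ delTerm hn Φ X Y ip) ∧
      ∀ k, |delTerm hn Φ X Y k| ≤ -delTerm hn Φ X Y im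

/-- `M̃(d,E)`: the space of oriented tropical Plücker vectors of rank `d` on `E`,
as a subset of `ℝ^{E^d}`. -/
def Mt (d : ℕ) (E : Type*) : Set ((Fin d → E) → ℝ) := {Φ | IsOrientedTP d Φ}

open Classical in
/-- Pushforward of `Φ : E^d → ℝ` along an (injective) map `α : E → F`. -/
noncomputable def pushforward {E F : Type*} {d : ℕ} (α : E → F) (Φ : (Fin d → E) → ℝ) :
    (Fin d → F) → ℝ :=
  fun y => if h : ∃ x : Fin d → E, ∀ i, y i = α (x i) then Φ h.choose else 0

/-! ### Finsets, ordered tuples, evaluation -/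

/-- The increasing enumeration of a `d`-element finite subset of a linearly ordered set. -/
def finsetTuple {E : Type*} [LinearOrder E] {d : ℕ} (B : Finset E) (h : B.card = d) :
    Fin d → E :=
  fun i => (B.orderIsoOfFin h i : E)

/-- Evaluation of an alternating function on a finite set, via its increasing enumeration
(and `0` if the set does not have the right cardinality). -/
noncomputable def evalOn {E : Type*} [LinearOrder E] {d : ℕ} (χ : (Fin d → E) → ℝ)
    (B : Finset E) : ℝ :=
  if h : B.card = d then χ (finsetTuple B h) else 0

/-! ### Tropical numbers and valuated matroids -/

/-- `−log|x| ∈ 𝕋 = ℝ ∪ {∞}` (with `−log 0 = ∞`). -/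
noncomputable def negLogAbs (x : ℝ) : WithTop ℝ :=
  if x = 0 then ⊤ else ((- Real.log |x| : ℝ) : WithTop ℝ)

/-- The map `𝕋 → ℝ`, `x ↦ e^{−x}` (with `∞ ↦ 0`); it is injective with image `[0,∞)`,
so the topology on `𝕋` making it a homeomorphism onto `[0,∞)` is the topology induced by it. -/
noncomputable def tropToReal : WithTop ℝ → ℝ :=
  WithTop.recTopCoe 0 fun r => Real.exp (-r)

/-- `I_φ(X,Y)`: the set of `i ∈ X \ Y` attaining the minimum of `φ(X∖{i}) + φ(Y∪{i})`. -/
def argminSet {E : Type*} [DecidableEq E] (φ : Finset E → WithTop ℝ) (X Y : Finset E) :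
    Set E :=
  {i | i ∈ X \ Y ∧ ∀ j ∈ X \ Y,
    φ (X.erase i) + φ (insert i Y) ≤ φ (X.erase j) + φ (insert j Y)}

/-- `φ` is a tropical Plücker vector of rank `d`: not identically `∞` on `binom(E,d)`,
and each `I_φ(X,Y)` has cardinality at least `2`. -/
def IsTropPlucker {E : Type*} [DecidableEq E] (d : ℕ) (φ : Finset E → WithTop ℝ) : Prop :=
  (∃ B : Finset E, B.card = d ∧ φ B ≠ ⊤) ∧
  ∀ X Y : Finset E, X.card = d + 1 → Y.card = d - 1 →
    ∃ i ∈ argminSet φ X Y, ∃ j ∈ argminSet φ X Y, i ≠ j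

/-- The (tropical) Plücker coordinates `B ↦ −log|Φ(B)|` of `Φ`. -/
noncomputable def tropOf {E : Type*} [LinearOrder E] {d : ℕ} (Φ : (Fin d → E) → ℝ) :
    Finset E → WithTop ℝ :=
  fun B => negLogAbs (evalOn Φ B)

/-! ### Chirotopes -/

/-- A chirotope of rank `d` on `E`: an alternating `{−1,0,+1}`-valued function,
not identically zero, satisfying the chirotope exchange condition. -/
def IsChirotope {E : Type*} (d : ℕ) (χ : (Fin d → E) → ℝ) : Prop :=
  (∀ x, χ x = -1 ∨ χ x = 0 ∨ χ x = 1) ∧ IsAlternating χ ∧ (∃ x, χ x ≠ 0) ∧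
  ∀ (n : ℕ) (hn : d = n + 1) (X : Fin (d + 1) → E) (Y : Fin n → E),
    (∀ k, delTerm hn χ X Y k = 0) ∨
    ((∃ k, delTerm hn χ X Y k = 1) ∧ ∃ k, delTerm hn χ X Y k = -1)

/-- Compatibility of a chirotope `χ` with a tropical Plücker vector `φ`:
`φ(B) = ∞` iff `χ(B) = 0`, and for every `X ∈ binom(E,d+1)`, `Y ∈ binom(E,d-1)`
(listed in increasing order) there exist indices `i, j` in the argmin set such that the
corresponding chirotope terms have opposite signs. -/
def ChiCompat {E : Type*} [LinearOrder E] (d : ℕ) (χ : (Fin d → E) → ℝ)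
    (φ : Finset E → WithTop ℝ) : Prop :=
  (∀ B : Finset E, B.card = d → (φ B = ⊤ ↔ evalOn χ B = 0)) ∧
  ∀ (n : ℕ) (hn : d = n + 1) (X Y : Finset E) (hX : X.card = d + 1) (hY : Y.card = n),
    ∃ i j : Fin (d + 1),
      (∀ k : Fin (d + 1),
        φ (X.erase (finsetTuple X hX i)) + φ (insert (finsetTuple X hX i) Y) ≤
          φ (X.erase (finsetTuple X hX k)) + φ (insert (finsetTuple X hX k) Y)) ∧
      (∀ k : Fin (d + 1),
        φ (X.erase (finsetTuple X hX j)) + φ (insert (finsetTuple X hX j) Y) ≤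
          φ (X.erase (finsetTuple X hX k)) + φ (insert (finsetTuple X hX k) Y)) ∧
      0 < delTerm hn χ (finsetTuple X hX) (finsetTuple Y hY) i ∧
      delTerm hn χ (finsetTuple X hX) (finsetTuple Y hY) j < 0

/-! ### The cells `C(p,I)` of the Dressian -/

/-- Membership in the cell `C(p,I)`: a tropical Plücker vector with underlying matroid `p`
and initial datum `I`. -/
def IsInC {E : Type*} [DecidableEq E] (d : ℕ) (p : Finset E → Bool)
    (I : Finset E → Finset E → Set E) (φ : Finset E → WithTop ℝ) : Prop :=
  IsTropPlucker d φ ∧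
  (∀ B : Finset E, B.card = d → (p B = true ↔ φ B ≠ ⊤)) ∧
  ∀ X Y : Finset E, X.card = d + 1 → Y.card = d - 1 → argminSet φ X Y = I X Y

/-- The support (set of bases) of a matroid `p : binom(E,d) → {0,1}`. -/
def suppSet {E : Type*} (d : ℕ) (p : Finset E → Bool) : Set (Finset E) :=
  {B | B.card = d ∧ p B = true}

open Classical in
/-- Extend a vector of finite coordinates on `supp(p)` to all of `binom(E,d)` by `∞`. -/
noncomputable def extendFin {E : Type*} (d : ℕ) (p : Finset E → Bool)
    (f : ↥(suppSet d p) → ℝ) : Finset E → WithTop ℝ :=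
  fun B => if h : B ∈ suppSet d p then ((f ⟨B, h⟩ : ℝ) : WithTop ℝ) else ⊤

/-- The cell `C(p,I)`, identified with a subset of `ℝ^{supp(p)}` by recording the finite
coordinates. -/
def CRealCoords {E : Type*} [DecidableEq E] (d : ℕ) (p : Finset E → Bool)
    (I : Finset E → Finset E → Set E) : Set (↥(suppSet d p) → ℝ) :=
  {f | IsInC d p I (extendFin d p f)}

/-- Extend `φ : binom(E,d) → 𝕋` to all finite subsets by `∞`. -/
noncomputable def extendTrop {E : Type*} (d : ℕ)
    (φ : {B : Finset E // B.card = d} → WithTop ℝ) : Finset E → WithTop ℝ :=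
  fun B => if h : B.card = d then φ ⟨B, h⟩ else ⊤

/-- The cell `C(p,I)` as a subset of `𝕋^{binom(E,d)}`. -/
def Cset {E : Type*} [DecidableEq E] (d : ℕ) (p : Finset E → Bool)
    (I : Finset E → Finset E → Set E) : Set ({B : Finset E // B.card = d} → WithTop ℝ) :=
  {φ | IsInC d p I (extendTrop d φ)}

/-- The set of tropical Plücker vectors inside `𝕋^{binom(E,d)}`. -/
def TPVset {E : Type*} [DecidableEq E] (d : ℕ) :
    Set ({B : Finset E // B.card = d} → WithTop ℝ) :=
  {φ | IsTropPlucker d (extendTrop d φ)}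

/-! ### Cells of the space of oriented valuated matroids -/

/-- The cell `D̃(χ,I)`: oriented tropical Plücker vectors with chirotope `χ` and
initial datum `I`. -/
def Dset {E : Type*} [LinearOrder E] (d : ℕ) (χ : (Fin d → E) → ℝ)
    (I : Finset E → Finset E → Set E) : Set ((Fin d → E) → ℝ) :=
  {Φ | IsOrientedTP d Φ ∧ (∀ x, Real.sign (Φ x) = χ x) ∧
    ∀ X Y : Finset E, X.card = d + 1 → Y.card = d - 1 → argminSet (tropOf Φ) X Y = I X Y}

/-- The Plücker coordinates of an alternating function, indexed by `binom(E,d)`. -/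
def toCoords {E : Type*} [LinearOrder E] (d : ℕ) (Φ : (Fin d → E) → ℝ) :
    {B : Finset E // B.card = d} → ℝ :=
  fun B => Φ (finsetTuple B.1 B.2)

/-- The cell `D̃(χ,I)` inside `ℝ^{binom(E,d)}`. -/
def DsetCoords {E : Type*} [LinearOrder E] (d : ℕ) (χ : (Fin d → E) → ℝ)
    (I : Finset E → Finset E → Set E) : Set ({B : Finset E // B.card = d} → ℝ) :=
  toCoords d '' Dset d χ I

/-- `M̃(d,E)` inside `ℝ^{binom(E,d)}`. -/
def MtCoords {E : Type*} [LinearOrder E] (d : ℕ) :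
    Set ({B : Finset E // B.card = d} → ℝ) :=
  toCoords d '' Mt d E

open Classical in
/-- The underlying matroid `|χ|` of a chirotope, as `binom(E,d) → {0,1}`. -/
noncomputable def chiSupp {E : Type*} [LinearOrder E] {d : ℕ} (χ : (Fin d → E) → ℝ) :
    Finset E → Bool :=
  fun B => if evalOn χ B = 0 then false else true

/-- Compatibility of an initial datum `I` with a chirotope `χ`. -/
def InitCompat {E : Type*} [LinearOrder E] (d : ℕ)
    (I : Finset E → Finset E → Set E) (χ : (Fin d → E) → ℝ) : Prop :=
  (∃ φ : Finset E → WithTop ℝ, IsTropPlucker d φ ∧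
      (∀ B : Finset E, B.card = d → (φ B ≠ ⊤ ↔ evalOn χ B ≠ 0)) ∧
      ∀ X Y : Finset E, X.card = d + 1 → Y.card = d - 1 → argminSet φ X Y = I X Y) ∧
  ∀ (n : ℕ) (hn : d = n + 1) (X Y : Finset E) (hX : X.card = d + 1) (hY : Y.card = n),
    (∀ k, delTerm hn χ (finsetTuple X hX) (finsetTuple Y hY) k = 0) ∨
    ∃ kp km : Fin (d + 1),
      finsetTuple X hX kp ∈ I X Y ∧ finsetTuple X hX km ∈ I X Y ∧
      delTerm hn χ (finsetTuple X hX) (finsetTuple Y hY) kp = 1 ∧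
      delTerm hn χ (finsetTuple X hX) (finsetTuple Y hY) km = -1

/-- The maximal initial datum `I_max^χ` compatible with a chirotope `χ`. -/
def Imax {E : Type*} [LinearOrder E] (d : ℕ) (χ : (Fin d → E) → ℝ) :
    Finset E → Finset E → Set E :=
  fun X Y => {x | x ∈ X \ Y ∧ |evalOn χ (X.erase x)| * |evalOn χ (insert x Y)| ≠ 0}

/-! ### The MacPhersonian as a preordered set -/

/-- `τ` is a specialization of `χ`: each Plücker coordinate of `τ` is the corresponding
coordinate of `χ` or `0`. -/
def SpecRel {E : Type*} [LinearOrder E] (d : ℕ) (χ τ : (Fin d → E) → ℝ) : Prop :=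
  ∀ B : Finset E, B.card = d → evalOn τ B = evalOn χ B ∨ evalOn τ B = 0

/-- The equivalence `χ ∼ −χ` on functions `E^d → ℝ`. -/
def ChiSetoid (E : Type*) (d : ℕ) : Setoid ((Fin d → E) → ℝ) where
  r χ τ := τ = χ ∨ τ = -χ
  iseqv := by
    refine ⟨fun x => Or.inl rfl, ?_, ?_⟩
    · rintro x y (rfl | rfl)
      · exact Or.inl rfl
      · exact Or.inr (neg_neg x).symm
    · rintro x y z (rfl | rfl) (rfl | rfl)
      · exact Or.inl rfl
      · exact Or.inr rfl
      · exact Or.inr rfl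
      · exact Or.inl (neg_neg x)

/-- The MacPhersonian: elements are equivalence classes `[χ]` of chirotopes of rank `d` on
`E` under `χ ∼ −χ`. -/
def MacP (E : Type*) (d : ℕ) : Type _ :=
  {q : Quotient (ChiSetoid E d) // ∃ χ, IsChirotope d χ ∧ Quotient.mk (ChiSetoid E d) χ = q}

lemma evalOn_neg {E : Type*} [LinearOrder E] {d : ℕ} (χ : (Fin d → E) → ℝ) (B : Finset E) :
    evalOn (-χ) B = -evalOn χ B := by
  unfold evalOn
  split <;> simp

/-- The specialization preorder on the MacPhersonian. -/
instance MacP.instPreorder (E : Type*) [LinearOrder E] (d : ℕ) : Preorder (MacP E d) where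
  le x y := ∃ a b : (Fin d → E) → ℝ,
    Quotient.mk (ChiSetoid E d) a = x.1 ∧ Quotient.mk (ChiSetoid E d) b = y.1 ∧ SpecRel d a b
  le_refl x := by
    obtain ⟨χ, hχ, hq⟩ := x.2
    exact ⟨χ, χ, hq, hq, fun B _ => Or.inl rfl⟩
  le_trans x y z hxy hyz := by
    obtain ⟨a, b, ha, hb, hab⟩ := hxy
    obtain ⟨b', c, hb', hc, hbc⟩ := hyz
    have comp : ∀ {u v w : (Fin d → E) → ℝ}, SpecRel d u v → SpecRel d v w → SpecRel d u w := by
      intro u v w h1 h2 B hB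
      rcases h2 B hB with h | h
      · rw [h]; exact h1 B hB
      · exact Or.inr h
    have hneg : ∀ {u v : (Fin d → E) → ℝ}, SpecRel d u v → SpecRel d (-u) (-v) := by
      intro u v h B hB
      rw [evalOn_neg, evalOn_neg]
      rcases h B hB with h1 | h1
      · exact Or.inl (by rw [h1])
      · exact Or.inr (by rw [h1, neg_zero])
    have hbb' : b = b' ∨ b = -b' := Quotient.exact (hb'.trans hb.symm)
    rcases hbb' with h | h
    · subst h
      exact ⟨a, c, ha, hc, comp hab hbc⟩
    · have h1 : SpecRel d b (-c) := by
        have := hneg hbc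
        rwa [← h] at this
      refine ⟨a, -c, ha, ?_, comp hab h1⟩
      rw [← hc]
      exact Quotient.sound (Or.inr (neg_neg c).symm)

/-! ### Projectivizations -/

/-- The scaling equivalence on a subset `S ⊆ ℝ^ι`. -/
def scalingSetoid {ι : Type*} (S : Set (ι → ℝ)) : Setoid ↥S where
  r f g := ∃ c : ℝ, c ≠ 0 ∧ (g : ι → ℝ) = c • (f : ι → ℝ)
  iseqv := by
    refine ⟨fun f => ⟨1, one_ne_zero, (one_smul ℝ _).symm⟩, ?_, ?_⟩
    · rintro f g ⟨c, hc, h⟩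
      exact ⟨c⁻¹, inv_ne_zero hc, by rw [h, smul_smul, inv_mul_cancel₀ hc, one_smul]⟩
    · rintro f g h ⟨c, hc, h1⟩ ⟨c', hc', h2⟩
      exact ⟨c' * c, mul_ne_zero hc' hc, by rw [h2, h1, smul_smul]⟩

/-! ### Matroids on the ground set ℕ -/

/-- `Φ : ℕ^d → ℝ` is finitely supported. -/
def FinSupp (d : ℕ) (Φ : (Fin d → ℕ) → ℝ) : Prop :=
  ∃ S : Finset ℕ, ∀ x : Fin d → ℕ, (∃ i, x i ∉ S) → Φ x = 0

/-- `M̃(d,ℕ)`: finitely supported oriented tropical Plücker vectors of rank `d` on `ℕ`. -/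
def MtN (d : ℕ) : Set ((Fin d → ℕ) → ℝ) := {Φ | IsOrientedTP d Φ ∧ FinSupp d Φ}

/-- `M(d,ℕ)`: the projectivization of `M̃(d,ℕ)`, with the quotient topology. -/
abbrev MprojN (d : ℕ) := Quotient (scalingSetoid (MtN d))

/-- Transport along an equality of ranks. -/
def recast {m n : ℕ} (h : m = n) (Φ : (Fin m → ℕ) → ℝ) : (Fin n → ℕ) → ℝ :=
  fun y => Φ (y ∘ Fin.cast h)

/-! ### Matroid sliding -/

open Classical in
/-- The slide `Φ_t^A` of `Φ` along a tuple `A` of injective maps `E → F` with pairwise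
disjoint images, at a point `t` of the standard simplex. -/
noncomputable def slide {E F : Type*} {d n : ℕ} (A : Fin (n + 1) → E → F)
    (t : Fin (n + 1) → ℝ) (Φ : (Fin d → E) → ℝ) : (Fin d → F) → ℝ :=
  fun x =>
    if h : ∀ i, ∃ k e, x i = A k e then
      Φ (fun i => (h i).choose_spec.choose) *
        ∏ k : Fin (n + 1), t k ^ (Finset.univ.filter fun i : Fin d => ∃ e, x i = A k e).card
    else 0

/-! ### Direct sums -/

/-- `D` is the direct sum `Φ₁ ⊕ Φ₂`: the unique alternating function on
`(E₁ ⊔ E₂)^{d₁+d₂}` vanishing on tuples not having exactly `d₁` entries from `E₁` and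
`d₂` entries from `E₂`, and restricting to `(x,y) ↦ Φ₁(x)·Φ₂(y)` on `E₁^{d₁} × E₂^{d₂}`. -/
def IsDirectSum {E₁ E₂ : Type*} {d₁ d₂ : ℕ} (Φ₁ : (Fin d₁ → E₁) → ℝ)
    (Φ₂ : (Fin d₂ → E₂) → ℝ) (D : (Fin (d₁ + d₂) → E₁ ⊕ E₂) → ℝ) : Prop :=
  IsAlternating D ∧
  (∀ z : Fin (d₁ + d₂) → E₁ ⊕ E₂,
      ¬ ((Finset.univ.filter fun i => (z i).isLeft = true).card = d₁ ∧
          (Finset.univ.filter fun i => (z i).isRight = true).card = d₂) → D z = 0) ∧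
  ∀ (x : Fin d₁ → E₁) (y : Fin d₂ → E₂),
    D (Sum.elim (fun a => Sum.inl (x a)) (fun b => Sum.inr (y b)) ∘ finSumFinEquiv.symm) =
      Φ₁ x * Φ₂ y

/-! ### Tropical projective space -/

private lemma trop_add_cancel (w : WithTop ℝ) (lam : ℝ) :
    w = w + (lam : WithTop ℝ) + ((-lam : ℝ) : WithTop ℝ) := by
  induction w using WithTop.recTopCoe with
  | top => simp
  | coe r => rw [← WithTop.coe_add, ← WithTop.coe_add, WithTop.coe_inj]; ring

/-- The action of `(ℝ,+)` on `𝕋^n ∖ {(∞,…,∞)}` by simultaneous translation. -/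
def tropProjSetoid (n : ℕ) : Setoid {x : Fin n → WithTop ℝ // ∃ i, x i ≠ ⊤} where
  r x y := ∃ lam : ℝ, ∀ i, (y : Fin n → WithTop ℝ) i = x.1 i + (lam : WithTop ℝ)
  iseqv := by
    refine ⟨fun x => ⟨0, fun i => by simp⟩, ?_, ?_⟩
    · rintro x y ⟨lam, h⟩
      refine ⟨-lam, fun i => ?_⟩
      rw [h i]
      exact trop_add_cancel _ _
    · rintro x y z ⟨lam, h1⟩ ⟨mu, h2⟩
      refine ⟨lam + mu, fun i => ?_⟩
      rw [h2 i, h1 i, WithTop.coe_add, add_assoc]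

end

/-! ## Statement 3 -/

section SlideAux

variable {E F : Type*} {n : ℕ} {A : Fin (n + 1) → E → F}

lemma A_unique (hinj : ∀ k, Function.Injective (A k))
    (hdisj : ∀ k l, k ≠ l → Disjoint (Set.range (A k)) (Set.range (A l)))
    {k l : Fin (n + 1)} {e e' : E} (h : A k e = A l e') : k = l ∧ e = e' := by
  rcases eq_or_ne k l with rfl | hkl
  · exact ⟨rfl, hinj k h⟩
  · exact absurd ⟨e', h.symm⟩ (fun hm => Set.disjoint_left.mp (hdisj k l hkl) ⟨e, rfl⟩ hm)

lemma slide_eq_zero' {d : ℕ} (t : Fin (n + 1) → ℝ) (Φ : (Fin d → E) → ℝ)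
    (x : Fin d → F) (h : ¬ ∀ i, ∃ k e, x i = A k e) : slide A t Φ x = 0 := by
  unfold slide
  rw [dif_neg h]

lemma slide_eq' {d : ℕ} (hinj : ∀ k, Function.Injective (A k))
    (hdisj : ∀ k l, k ≠ l → Disjoint (Set.range (A k)) (Set.range (A l)))
    (t : Fin (n + 1) → ℝ) (Φ : (Fin d → E) → ℝ)
    (x : Fin d → F) (κ : Fin d → Fin (n + 1)) (xe : Fin d → E)
    (hx : ∀ i, x i = A (κ i) (xe i)) :
    slide A t Φ x = Φ xe * ∏ k, t k ^ (Finset.univ.filter fun i => κ i = k).card := by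
  classical
  have h : ∀ i, ∃ k e, x i = A k e := fun i => ⟨κ i, xe i, hx i⟩
  unfold slide
  rw [dif_pos h]
  have hch : ∀ i, (h i).choose = κ i ∧ (h i).choose_spec.choose = xe i := fun i =>
    A_unique hinj hdisj ((h i).choose_spec.choose_spec.symm.trans (hx i))
  congr 1
  · exact congrArg Φ (funext fun i => (hch i).2)
  · refine Finset.prod_congr rfl fun k _ => ?_
    congr 1
    rw [Finset.card_filter, Finset.card_filter]
    refine Finset.sum_congr rfl fun i _ => ?_
    by_cases hik : κ i = k
    · rw [if_pos hik, if_pos ⟨xe i, by rw [hx i, hik]⟩]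
    · rw [if_neg hik,
        if_neg (fun hhe => hik (A_unique hinj hdisj ((hx i).symm.trans hhe.choose_spec)).1)]

end SlideAux

theorem statement3 {E F : Type*} [Fintype E] [Fintype F] (d : ℕ) (hd : 1 ≤ d) (n : ℕ)
    (A : Fin (n + 1) → E → F) (hinj : ∀ k, Function.Injective (A k))
    (hdisj : ∀ k l, k ≠ l → Disjoint (Set.range (A k)) (Set.range (A l)))
    (Φ : (Fin d → E) → ℝ) (hΦ : IsOrientedTP d Φ) :
    (∀ t : Fin (n + 1) → ℝ, (∀ k, 0 ≤ t k) → ∑ k, t k = 1 →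
      IsOrientedTP d (slide A t Φ)) ∧
    ∀ k : Fin (n + 1),
      slide A (fun l => if l = k then 1 else 0) Φ = pushforward (A k) Φ := by
  classical
  obtain ⟨⟨hAlt1, hAlt2⟩, ⟨x0, hx0⟩, hPl⟩ := hΦ
  constructor
  · intro t ht hts
    refine ⟨⟨?_, ?_⟩, ?_, ?_⟩
    · -- alternating: sign rule
      intro σ x
      by_cases h : ∀ i, ∃ k e, x i = A k e
      · choose κ xe hx using h
        rw [slide_eq' hinj hdisj t Φ x κ xe hx,
          slide_eq' hinj hdisj t Φ (x ∘ σ) (κ ∘ σ) (xe ∘ σ) (fun i => hx (σ i))]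
        have hcard : ∀ k : Fin (n + 1),
            (Finset.univ.filter fun i => (κ ∘ σ) i = k).card
              = (Finset.univ.filter fun i => κ i = k).card := by
          intro k
          rw [Finset.card_filter, Finset.card_filter]
          exact Equiv.sum_comp σ fun i => if κ i = k then 1 else 0
        rw [Finset.prod_congr rfl fun k _ => by rw [hcard k], hAlt1 σ xe]
        ring
      · have h' : ¬ ∀ i, ∃ k e, (x ∘ σ) i = A k e := by
          intro h'
          exact h fun i => by simpa using h' (σ.symm i)
        rw [slide_eq_zero' t Φ _ h', slide_eq_zero' t Φ _ h, mul_zero]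
    · -- alternating: vanishing on non-injective tuples
      intro x hx
      by_cases h : ∀ i, ∃ k e, x i = A k e
      · choose κ xe hxe using h
        rw [slide_eq' hinj hdisj t Φ x κ xe hxe]
        have hni : ¬ Function.Injective xe := by
          intro hxi
          apply hx
          intro i j hij
          exact hxi (A_unique hinj hdisj ((hxe i).symm.trans (hij.symm ▸ hxe j))).2
        rw [hAlt2 xe hni, zero_mul]
      · exact slide_eq_zero' t Φ x h
    · -- not identically zero
      have hk0 : ∃ k0, t k0 ≠ 0 := by
        by_contra hcon
        push_neg at hcon
        rw [Finset.sum_congr rfl fun k _ => hcon k] at hts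
        simp at hts
      obtain ⟨k0, hk0⟩ := hk0
      refine ⟨fun i => A k0 (x0 i), ?_⟩
      rw [slide_eq' hinj hdisj t Φ _ (fun _ => k0) x0 (fun i => rfl)]
      refine mul_ne_zero hx0 (Finset.prod_ne_zero_iff.2 fun k _ => ?_)
      rcases eq_or_ne k k0 with rfl | hk
      · exact pow_ne_zero _ hk0
      · rw [Finset.filter_false_of_mem fun i _ hik => hk (id hik).symm,
          Finset.card_empty, pow_zero]
        exact one_ne_zero
    · -- Plücker relations
      intro m hm X Y
      by_cases hY : ∀ j, ∃ k e, Y j = A k e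
      · by_cases hX : ∀ i, ∃ k e, X i = A k e
        · choose κX Xe hXe using hX
          choose κY Ye hYe using hY
          set C : ℝ := ∏ k, t k ^ ((Finset.univ.filter fun i => κX i = k).card
              + (Finset.univ.filter fun j => κY j = k).card) with hC
          have hkey : ∀ i, delTerm hm (slide A t Φ) X Y i = C * delTerm hm Φ Xe Ye i := by
            intro i
            have h1 : slide A t Φ (X ∘ i.succAbove)
                = Φ (Xe ∘ i.succAbove) *
                  ∏ k, t k ^ (Finset.univ.filter fun j => (κX ∘ i.succAbove) j = k).card :=
              slide_eq' hinj hdisj t Φ _ (κX ∘ i.succAbove) (Xe ∘ i.succAbove)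
                (fun j => hXe _)
            have h2 : slide A t Φ (Fin.cons (X i) Y ∘ Fin.cast hm)
                = Φ (Fin.cons (Xe i) Ye ∘ Fin.cast hm) *
                  ∏ k, t k ^ (Finset.univ.filter
                    fun j => (Fin.cons (κX i) κY ∘ Fin.cast hm) j = k).card := by
              refine slide_eq' hinj hdisj t Φ _ (Fin.cons (κX i) κY ∘ Fin.cast hm)
                (Fin.cons (Xe i) Ye ∘ Fin.cast hm) fun j => ?_
              simp only [Function.comp_apply]
              rcases Fin.eq_zero_or_eq_succ (Fin.cast hm j) with hc | ⟨j', hc⟩ <;>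
                rw [hc] <;> simp [Fin.cons_zero, Fin.cons_succ, hXe, hYe]
            set g : Fin (m + 1) → Fin (n + 1) := Fin.cons (κX i) κY with hg
            have hcard : ∀ k : Fin (n + 1),
                (Finset.univ.filter fun j => (κX ∘ i.succAbove) j = k).card
                  + (Finset.univ.filter fun j => (g ∘ Fin.cast hm) j = k).card
                = (Finset.univ.filter fun i => κX i = k).card
                  + (Finset.univ.filter fun j => κY j = k).card := by
              intro k
              simp only [Finset.card_filter, Function.comp_apply]
              have e1 : ∑ j : Fin (d + 1), (if κX j = k then 1 else 0)
                  = (if κX i = k then 1 else 0)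
                    + ∑ j : Fin d, (if κX (i.succAbove j) = k then 1 else 0) :=
                Fin.sum_univ_succAbove (fun j => if κX j = k then 1 else 0) i
              have e2 : ∑ j : Fin d, (if g (Fin.cast hm j) = k then (1:ℕ) else 0)
                  = ∑ j : Fin (m + 1), (if g j = k then (1:ℕ) else 0) :=
                Fintype.sum_equiv (finCongr hm)
                  (fun j => if g (Fin.cast hm j) = k then (1:ℕ) else 0)
                  (fun j => if g j = k then (1:ℕ) else 0)
                  (fun j => by simp)
              have e3 : ∑ j : Fin (m + 1), (if g j = k then (1:ℕ) else 0)
                  = (if κX i = k then 1 else 0)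
                    + ∑ j : Fin m, (if κY j = k then 1 else 0) := by
                rw [Fin.sum_univ_succ]
                simp [hg, Fin.cons_zero, Fin.cons_succ]
              rw [e2, e3, e1]
              ring
            have hP : (∏ k, t k ^ (Finset.univ.filter
                  fun j => (κX ∘ i.succAbove) j = k).card)
                * (∏ k, t k ^ (Finset.univ.filter
                  fun j => (Fin.cons (κX i) κY ∘ Fin.cast hm) j = k).card) = C := by
              rw [← Finset.prod_mul_distrib]
              exact Finset.prod_congr rfl fun k _ => by rw [← pow_add, hcard k]
            unfold delTerm
            rw [h1, h2, ← hP]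
            ring
          have hC0 : 0 ≤ C := Finset.prod_nonneg fun k _ => pow_nonneg (ht k) _
          rcases eq_or_lt_of_le hC0 with hC' | hC'
          · left
            intro i
            rw [hkey i, ← hC', zero_mul]
          · rcases hPl m hm Xe Ye with hz | ⟨ip, im, h1, h2, h3, h4⟩
            · left
              intro i
              rw [hkey i, hz i, mul_zero]
            · right
              refine ⟨ip, im, ?_, ?_, ?_, ?_⟩
              · rw [hkey]; exact mul_pos hC' h1
              · rw [hkey]; exact mul_neg_of_pos_of_neg hC' h2
              · intro k
                rw [hkey, hkey, abs_mul, abs_of_pos hC']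
                exact mul_le_mul_of_nonneg_left (h3 k) hC'.le
              · intro k
                rw [hkey, hkey, abs_mul, abs_of_pos hC', ← mul_neg]
                exact mul_le_mul_of_nonneg_left (h4 k) hC'.le
        · -- some X i₀ has no preimage
          push_neg at hX
          obtain ⟨i₀, hi₀⟩ := hX
          left
          intro i
          unfold delTerm
          rcases eq_or_ne i i₀ with rfl | hii
          · have hz : slide A t Φ (Fin.cons (X i) Y ∘ Fin.cast hm) = 0 := by
              apply slide_eq_zero'
              intro hall
              obtain ⟨k, e, he⟩ := hall ((Fin.cast hm.symm 0))
              exact hi₀ k e (by simpa using he)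
            rw [hz, mul_zero]
          · obtain ⟨j, hj⟩ := Fin.exists_succAbove_eq (Ne.symm hii)
            have hz : slide A t Φ (X ∘ i.succAbove) = 0 := by
              apply slide_eq_zero'
              intro hall
              obtain ⟨k, e, he⟩ := hall j
              exact hi₀ k e (by simpa [hj] using he)
            rw [hz, mul_zero, zero_mul]
      · -- some Y j₀ has no preimage
        push_neg at hY
        obtain ⟨j₀, hj₀⟩ := hY
        left
        intro i
        unfold delTerm
        have hz : slide A t Φ (Fin.cons (X i) Y ∘ Fin.cast hm) = 0 := by
          apply slide_eq_zero'
          intro hall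
          obtain ⟨k, e, he⟩ := hall ((Fin.cast hm.symm j₀.succ))
          exact hj₀ k e (by simpa using he)
        rw [hz, mul_zero]
  · -- slides at vertices are pushforwards
    intro k
    funext x
    by_cases h : ∃ xe : Fin d → E, ∀ i, x i = A k (xe i)
    · obtain ⟨xe, hxe⟩ := h
      rw [slide_eq' hinj hdisj _ Φ x (fun _ => k) xe hxe]
      have hh : ∃ x' : Fin d → E, ∀ i, x i = A k (x' i) := ⟨xe, hxe⟩
      have hp : pushforward (A k) Φ x = Φ xe := by
        unfold pushforward
        rw [dif_pos hh]
        exact congrArg Φ (funext fun i => hinj k ((hh.choose_spec i).symm.trans (hxe i)))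
      rw [hp]
      have hone : ∏ l, (if l = k then (1:ℝ) else 0)
          ^ (Finset.univ.filter fun i : Fin d => (fun _ => k) i = l).card = 1 := by
        apply Finset.prod_eq_one
        intro l _
        rcases eq_or_ne l k with rfl | hlk
        · simp
        · rw [if_neg hlk, Finset.filter_false_of_mem fun i _ hkl => hlk hkl.symm,
            Finset.card_empty, pow_zero]
      rw [hone, mul_one]
    · have hp0 : pushforward (A k) Φ x = 0 := by
        unfold pushforward
        rw [dif_neg h]
      rw [hp0]
      by_cases hall : ∀ i, ∃ l e, x i = A l e
      · choose κ xe hxe using hall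
        rw [slide_eq' hinj hdisj _ Φ x κ xe hxe]
        have hex : ∃ i₀, κ i₀ ≠ k := by
          by_contra hcon
          push_neg at hcon
          exact h ⟨xe, fun i => by rw [hxe i, hcon i]⟩
        obtain ⟨i₀, hi₀⟩ := hex
        apply mul_eq_zero_of_right
        apply Finset.prod_eq_zero (Finset.mem_univ (κ i₀))
        rw [if_neg hi₀]
        apply zero_pow
        exact Finset.card_ne_zero_of_mem (Finset.mem_filter.2 ⟨Finset.mem_univ _, rfl⟩)
      · exact slide_eq_zero' _ Φ x hall
end

section
/- Let E be a finite set, d ≥ 1, and let α, β : E → ℕ be injective maps such that both ℕ ∖ α(E) and ℕ ∖ β(E) are infinite. Then the induced maps α_*, β_* : M̃(d,E) → M̃(d,ℕ) are homotopic. -/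
open Finset

/-! ## Auxiliary material for Statement 5 -/

namespace Statement5Aux

/-- Weight of a summand: `1 - t` on the left, `t` on the right. -/
def wgt {E : Type*} (t : ℝ) : E ⊕ E → ℝ := Sum.elim (fun _ => 1 - t) (fun _ => t)

/-- Projection `E ⊕ E → E`. -/
def prj {E : Type*} : E ⊕ E → E := Sum.elim id id

open Classical in
/-- The sliding interpolation between two pushforwards. -/
noncomputable def mixF {E : Type*} {d : ℕ} (ι : E ⊕ E → ℕ) (t : ℝ)
    (Φ : (Fin d → E) → ℝ) (x : Fin d → ℕ) : ℝ :=
  if h : ∀ i, ∃ z : E ⊕ E, ι z = x i then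
    Φ (fun i => prj ((h i).choose)) * ∏ i, wgt t ((h i).choose)
  else 0

lemma mixF_neg {E : Type*} {d : ℕ} {ι : E ⊕ E → ℕ} {t : ℝ}
    {Φ : (Fin d → E) → ℝ} {x : Fin d → ℕ} (hx : ¬ ∀ i, ∃ z : E ⊕ E, ι z = x i) :
    mixF ι t Φ x = 0 := dif_neg hx

lemma mixF_apply {E : Type*} {d : ℕ} {ι : E ⊕ E → ℕ} (hι : Function.Injective ι)
    (t : ℝ) (Φ : (Fin d → E) → ℝ) (z : Fin d → E ⊕ E) :
    mixF ι t Φ (ι ∘ z) = Φ (fun i => prj (z i)) * ∏ i, wgt t (z i) := by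
  have h : ∀ i, ∃ w : E ⊕ E, ι w = (ι ∘ z) i := fun i => ⟨z i, rfl⟩
  have hch : ∀ i, (h i).choose = z i := fun i => hι ((h i).choose_spec)
  rw [mixF, dif_pos h]
  simp only [hch]

lemma wgt_nonneg {E : Type*} {t : ℝ} (h0 : 0 ≤ t) (h1 : t ≤ 1) (z : E ⊕ E) :
    0 ≤ wgt t z := by
  cases z <;> simp [wgt] <;> linarith

lemma delTerm_mixF {E : Type*} {d n : ℕ} (hn : d = n + 1) {ι : E ⊕ E → ℕ}
    (hι : Function.Injective ι) (t : ℝ) (Φ : (Fin d → E) → ℝ)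
    (Z : Fin (d + 1) → E ⊕ E) (W : Fin n → E ⊕ E) (i : Fin (d + 1)) :
    delTerm hn (mixF ι t Φ) (ι ∘ Z) (ι ∘ W) i =
      ((∏ k, wgt t (Z k)) * ∏ j, wgt t (W j)) *
        delTerm hn Φ (fun k => prj (Z k)) (fun j => prj (W j)) i := by
  have e1 : (ι ∘ Z) ∘ i.succAbove = ι ∘ (Z ∘ i.succAbove) := rfl
  have e2 : Fin.cons ((ι ∘ Z) i) (ι ∘ W) ∘ Fin.cast hn
      = ι ∘ (Fin.cons (Z i) W ∘ Fin.cast hn) := by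
    have : ι ∘ Fin.cons (Z i) W = Fin.cons (ι (Z i)) (ι ∘ W) := Fin.comp_cons ι (Z i) W
    funext k
    simp only [Function.comp_apply]
    have := congrFun this (Fin.cast hn k)
    simpa [Function.comp] using this.symm
  rw [delTerm, e1, e2, mixF_apply hι, mixF_apply hι]
  have e3 : (fun j => prj ((Z ∘ i.succAbove) j)) = (fun k => prj (Z k)) ∘ i.succAbove := rfl
  have e4 : (fun j => prj ((Fin.cons (Z i) W ∘ Fin.cast hn) j))
      = Fin.cons (prj (Z i)) (fun j => prj (W j)) ∘ Fin.cast hn := by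
    have : prj ∘ Fin.cons (Z i) W = Fin.cons (prj (Z i)) (fun j => prj (W j)) :=
      Fin.comp_cons prj (Z i) W
    funext k
    simp only [Function.comp_apply]
    have := congrFun this (Fin.cast hn k)
    simpa [Function.comp] using this
  rw [e3, e4]
  have pA : wgt t (Z i) * ∏ j, wgt t ((Z ∘ i.succAbove) j) = ∏ k, wgt t (Z k) := by
    have := Fin.prod_univ_succAbove (fun k => wgt t (Z k)) i
    simpa [Function.comp] using this.symm
  have pB : (∏ k : Fin d, wgt t ((Fin.cons (Z i) W ∘ Fin.cast hn) k))
      = wgt t (Z i) * ∏ j, wgt t (W j) := by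
    have h1 := Equiv.prod_comp (finCongr hn)
      (fun m => wgt t ((Fin.cons (Z i) W : Fin (n + 1) → E ⊕ E) m))
    rw [Fin.prod_univ_succ] at h1
    simpa [Function.comp, finCongr_apply] using h1
  rw [delTerm, pB, ← pA]
  ring

lemma delTerm_mixF_zero {E : Type*} {d n : ℕ} (hn : d = n + 1) {ι : E ⊕ E → ℕ}
    (t : ℝ) (Φ : (Fin d → E) → ℝ) {X : Fin (d + 1) → ℕ} {Y : Fin n → ℕ}
    (hbad : (∃ j, ¬ ∃ z : E ⊕ E, ι z = X j) ∨ (∃ j, ¬ ∃ z : E ⊕ E, ι z = Y j))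
    (i : Fin (d + 1)) : delTerm hn (mixF ι t Φ) X Y i = 0 := by
  rcases hbad with ⟨j, hj⟩ | ⟨j, hj⟩
  · by_cases hij : i = j
    · have h2 : mixF ι t Φ (Fin.cons (X i) Y ∘ Fin.cast hn) = 0 := by
        refine mixF_neg fun hall => hj ?_
        have := hall (Fin.cast hn.symm (0 : Fin (n + 1)))
        simpa [hij] using this
      rw [delTerm, h2, mul_zero]
    · obtain ⟨k, hk⟩ := Fin.exists_succAbove_eq (Ne.symm hij)
      have h1 : mixF ι t Φ (X ∘ i.succAbove) = 0 := by
        refine mixF_neg fun hall => hj ?_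
        have := hall k
        simpa [hk] using this
      rw [delTerm, h1, mul_zero, zero_mul]
  · have h2 : mixF ι t Φ (Fin.cons (X i) Y ∘ Fin.cast hn) = 0 := by
      refine mixF_neg fun hall => hj ?_
      have := hall (Fin.cast hn.symm (Fin.succ j))
      simpa using this
    rw [delTerm, h2, mul_zero]

lemma mixF_memMtN {E : Type*} [Fintype E] {d : ℕ} {ι : E ⊕ E → ℕ}
    (hι : Function.Injective ι) {t : ℝ} (ht0 : 0 ≤ t) (ht1 : t ≤ 1)
    {Φ : (Fin d → E) → ℝ} (hΦ : IsOrientedTP d Φ) : mixF ι t Φ ∈ MtN d := by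
  classical
  obtain ⟨⟨halt, hvan⟩, ⟨x₀, hx₀⟩, hrel⟩ := hΦ
  refine ⟨⟨⟨?_, ?_⟩, ?_, ?_⟩, ?_⟩
  · -- alternating: permutations
    intro σ x
    by_cases h : ∀ i, ∃ z : E ⊕ E, ι z = x i
    · have hxz : x = ι ∘ fun i => (h i).choose := funext fun i => ((h i).choose_spec).symm
      rw [hxz]
      have e1 : (ι ∘ fun i => (h i).choose) ∘ σ = ι ∘ fun i => (h (σ i)).choose := rfl
      rw [e1, mixF_apply hι, mixF_apply hι]
      have hperm := halt σ (fun i => prj ((h i).choose))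
      have e2 : (fun i => prj ((h i).choose)) ∘ σ = fun i => prj ((h (σ i)).choose) := rfl
      rw [e2] at hperm
      have hprod : (∏ i, wgt t ((h (σ i)).choose)) = ∏ i, wgt t ((h i).choose) :=
        Equiv.prod_comp σ (fun i => wgt t ((h i).choose))
      rw [hperm, hprod]
      ring
    · have h' : ¬ ∀ i, ∃ z : E ⊕ E, ι z = (x ∘ σ) i := by
        intro hall
        refine h fun i => ?_
        obtain ⟨z, hz⟩ := hall (σ⁻¹ i)
        exact ⟨z, by simpa using hz⟩
      rw [mixF_neg h', mixF_neg h, mul_zero]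
  · -- alternating: non-injective
    intro x hx
    by_cases h : ∀ i, ∃ z : E ⊕ E, ι z = x i
    · have hxz : x = ι ∘ fun i => (h i).choose := funext fun i => ((h i).choose_spec).symm
      rw [hxz, mixF_apply hι]
      have : ¬ Function.Injective (fun i => prj ((h i).choose)) := by
        intro hinj
        refine hx fun a b hab => hinj ?_
        have : (h a).choose = (h b).choose := hι (by
          rw [(h a).choose_spec, (h b).choose_spec, hab])
        simp [this]
      rw [hvan _ this, zero_mul]
    · exact mixF_neg h
  · -- not identically zero
    have hx₀ne : Φ x₀ ≠ 0 := hx₀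
    by_cases ht : t = 0
    · refine ⟨ι ∘ fun i => Sum.inl (x₀ i), ?_⟩
      rw [mixF_apply hι]
      simp [wgt, prj, ht, hx₀ne]
    · refine ⟨ι ∘ fun i => Sum.inr (x₀ i), ?_⟩
      rw [mixF_apply hι]
      simp only [prj, wgt, Sum.elim_inr, Finset.prod_const, Sum.elim_inl, id]
      exact mul_ne_zero (by simpa using hx₀ne) (pow_ne_zero _ ht)
  · -- Plücker relations
    intro n hn X Y
    by_cases hX : ∀ j, ∃ z : E ⊕ E, ι z = X j
    · by_cases hY : ∀ j, ∃ z : E ⊕ E, ι z = Y j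
      · have hXeq : X = ι ∘ fun j => (hX j).choose := funext fun j => ((hX j).choose_spec).symm
        have hYeq : Y = ι ∘ fun j => (hY j).choose := funext fun j => ((hY j).choose_spec).symm
        set Z : Fin (d + 1) → E ⊕ E := fun j => (hX j).choose with hZ
        set W : Fin n → E ⊕ E := fun j => (hY j).choose with hW
        set C : ℝ := (∏ k, wgt t (Z k)) * ∏ j, wgt t (W j) with hC
        have key : ∀ i, delTerm hn (mixF ι t Φ) X Y i
            = C * delTerm hn Φ (fun k => prj (Z k)) (fun j => prj (W j)) i := by
          intro i
          rw [hXeq, hYeq]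
          exact delTerm_mixF hn hι t Φ Z W i
        have hC0 : 0 ≤ C := mul_nonneg
          (Finset.prod_nonneg fun k _ => wgt_nonneg ht0 ht1 _)
          (Finset.prod_nonneg fun k _ => wgt_nonneg ht0 ht1 _)
        rcases eq_or_lt_of_le hC0 with hC0' | hC0'
        · left
          intro i
          rw [key i, ← hC0', zero_mul]
        · rcases hrel n hn (fun k => prj (Z k)) (fun j => prj (W j)) with hall | ⟨ip, im, h1, h2, h3, h4⟩
          · left
            intro i
            rw [key i, hall i, mul_zero]
          · right
            refine ⟨ip, im, ?_, ?_, ?_, ?_⟩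
            · rw [key]; exact mul_pos hC0' h1
            · rw [key]; exact mul_neg_of_pos_of_neg hC0' h2
            · intro k
              rw [key, key, abs_mul, abs_of_pos hC0']
              exact mul_le_mul_of_nonneg_left (h3 k) hC0'.le
            · intro k
              rw [key, key, abs_mul, abs_of_pos hC0', ← mul_neg]
              exact mul_le_mul_of_nonneg_left (h4 k) hC0'.le
      · left
        push_neg at hY
        obtain ⟨j, hj⟩ := hY
        exact delTerm_mixF_zero hn t Φ (Or.inr ⟨j, by simpa using hj⟩)
    · left
      push_neg at hX
      obtain ⟨j, hj⟩ := hX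
      exact delTerm_mixF_zero hn t Φ (Or.inl ⟨j, by simpa using hj⟩)
  · -- finite support
    refine ⟨Finset.image ι Finset.univ, fun x ⟨i, hi⟩ => ?_⟩
    refine mixF_neg fun hall => hi ?_
    obtain ⟨z, hz⟩ := hall i
    rw [← hz]
    exact Finset.mem_image_of_mem ι (Finset.mem_univ z)

lemma mixF_zero {E : Type*} {d : ℕ} {α γ : E → ℕ} (hα : Function.Injective α)
    (hdisj : ∀ a b, α a ≠ γ b) (Φ : (Fin d → E) → ℝ) :
    mixF (Sum.elim α γ) 0 Φ = pushforward α Φ := by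
  classical
  funext x
  by_cases h : ∀ i, ∃ z : E ⊕ E, Sum.elim α γ z = x i
  · rw [mixF, dif_pos h]
    by_cases hl : ∀ i, ∃ e, (h i).choose = Sum.inl e
    · have hx : ∀ i, x i = α (prj ((h i).choose)) := fun i => by
        obtain ⟨e, he⟩ := hl i
        have hs := (h i).choose_spec
        simp only [he, prj, Sum.elim_inl, id] at hs ⊢
        exact hs.symm
      have hex : ∃ e : Fin d → E, ∀ i, x i = α (e i) := ⟨_, hx⟩
      rw [pushforward, dif_pos hex]
      have hch : hex.choose = fun i => prj ((h i).choose) :=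
        funext fun i => hα (by rw [← hex.choose_spec i, ← hx i])
      rw [hch]
      have hw : ∀ i, wgt (0 : ℝ) ((h i).choose) = 1 := fun i => by
        obtain ⟨e, he⟩ := hl i
        rw [he]
        simp [wgt]
      rw [Finset.prod_congr rfl (fun i _ => hw i), Finset.prod_const_one, mul_one]
    · push_neg at hl
      obtain ⟨i, hi⟩ := hl
      obtain ⟨b, hb⟩ : ∃ b, (h i).choose = Sum.inr b := by
        rcases hS : (h i).choose with e | b
        · exact absurd hS (hi e)
        · exact ⟨b, rfl⟩
      have hprod : (∏ i, wgt (0 : ℝ) ((h i).choose)) = 0 :=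
        Finset.prod_eq_zero (Finset.mem_univ i) (by rw [hb]; simp [wgt])
      rw [hprod, mul_zero, pushforward, dif_neg]
      rintro ⟨e, he⟩
      have hxi : x i = γ b := by rw [← (h i).choose_spec, hb]; simp
      exact hdisj (e i) b (by rw [← he i, hxi])
  · rw [mixF, dif_neg h, pushforward, dif_neg]
    rintro ⟨e, he⟩
    exact h fun i => ⟨Sum.inl (e i), (he i).symm⟩

lemma mixF_one {E : Type*} {d : ℕ} {α γ : E → ℕ} (hγ : Function.Injective γ)
    (hdisj : ∀ a b, α a ≠ γ b) (Φ : (Fin d → E) → ℝ) :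
    mixF (Sum.elim α γ) 1 Φ = pushforward γ Φ := by
  classical
  funext x
  by_cases h : ∀ i, ∃ z : E ⊕ E, Sum.elim α γ z = x i
  · rw [mixF, dif_pos h]
    by_cases hl : ∀ i, ∃ e, (h i).choose = Sum.inr e
    · have hx : ∀ i, x i = γ (prj ((h i).choose)) := fun i => by
        obtain ⟨e, he⟩ := hl i
        have hs := (h i).choose_spec
        simp only [he, prj, Sum.elim_inr, id] at hs ⊢
        exact hs.symm
      have hex : ∃ e : Fin d → E, ∀ i, x i = γ (e i) := ⟨_, hx⟩
      rw [pushforward, dif_pos hex]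
      have hch : hex.choose = fun i => prj ((h i).choose) :=
        funext fun i => hγ (by rw [← hex.choose_spec i, ← hx i])
      rw [hch]
      have hw : ∀ i, wgt (1 : ℝ) ((h i).choose) = 1 := fun i => by
        obtain ⟨e, he⟩ := hl i
        rw [he]
        simp [wgt]
      rw [Finset.prod_congr rfl (fun i _ => hw i), Finset.prod_const_one, mul_one]
    · push_neg at hl
      obtain ⟨i, hi⟩ := hl
      obtain ⟨b, hb⟩ : ∃ b, (h i).choose = Sum.inl b := by
        rcases hS : (h i).choose with e | b
        · exact ⟨e, rfl⟩
        · exact absurd hS (hi b)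
      have hprod : (∏ i, wgt (1 : ℝ) ((h i).choose)) = 0 :=
        Finset.prod_eq_zero (Finset.mem_univ i) (by rw [hb]; simp [wgt])
      rw [hprod, mul_zero, pushforward, dif_neg]
      rintro ⟨e, he⟩
      have hxi : x i = α b := by rw [← (h i).choose_spec, hb]; simp
      exact hdisj b (e i) (by rw [← he i, hxi])
  · rw [mixF, dif_neg h, pushforward, dif_neg]
    rintro ⟨e, he⟩
    exact h fun i => ⟨Sum.inr (e i), (he i).symm⟩

end Statement5Aux

/-! ## Statement 5 -/

theorem statement5 {E : Type*} [Fintype E] (d : ℕ) (hd : 1 ≤ d)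
    (α β : E → ℕ) (hα : Function.Injective α) (hβ : Function.Injective β)
    (hcα : (Set.range α)ᶜ.Infinite) (hcβ : (Set.range β)ᶜ.Infinite) :
    ∀ f g : C(↥(Mt d E), ↥(MtN d)),
      (∀ Φ : ↥(Mt d E), (f Φ : (Fin d → ℕ) → ℝ) = pushforward α (Φ : (Fin d → E) → ℝ)) →
      (∀ Φ : ↥(Mt d E), (g Φ : (Fin d → ℕ) → ℝ) = pushforward β (Φ : (Fin d → E) → ℝ)) →
      Nonempty (f.Homotopy g) := by
  classical
  intro f g hf hg
  have hSfin : (Set.range α ∪ Set.range β).Finite :=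
    (Set.finite_range α).union (Set.finite_range β)
  have hSc : (Set.range α ∪ Set.range β)ᶜ.Infinite := hSfin.infinite_compl
  set γ : E → ℕ := fun e => ((Set.Infinite.natEmbedding _ hSc) (α e) : ℕ) with hγdef
  have hγ : Function.Injective γ := by
    intro a b h
    exact hα ((Set.Infinite.natEmbedding _ hSc).injective (Subtype.coe_injective h))
  have hγmem : ∀ e, γ e ∉ (Set.range α ∪ Set.range β) := fun e =>
    ((Set.Infinite.natEmbedding _ hSc) (α e)).2
  have hdα : ∀ a b, α a ≠ γ b := fun a b h =>
    hγmem b ((Set.mem_union _ _ _).2 (Or.inl ⟨a, h⟩))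
  have hdβ : ∀ a b, β a ≠ γ b := fun a b h =>
    hγmem b ((Set.mem_union _ _ _).2 (Or.inr ⟨a, h⟩))
  have hι : ∀ δ : E → ℕ, Function.Injective δ → (∀ a b, δ a ≠ γ b) →
      Function.Injective (Sum.elim δ γ) := by
    intro δ hδ hdis z w hzw
    match z, w with
    | .inl a, .inl b => exact congrArg Sum.inl (hδ hzw)
    | .inr a, .inr b => exact congrArg Sum.inr (hγ hzw)
    | .inl a, .inr b => exact absurd hzw (hdis a b)
    | .inr a, .inl b => exact absurd hzw.symm (hdis b a)
  have midmem : ∀ Φ : ↥(Mt d E), pushforward γ (Φ : (Fin d → E) → ℝ) ∈ MtN d := by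
    intro Φ
    rw [← Statement5Aux.mixF_one hγ hdα]
    exact Statement5Aux.mixF_memMtN (hι α hα hdα) zero_le_one le_rfl Φ.2
  have midcont : Continuous fun Φ : ↥(Mt d E) =>
      pushforward γ (Φ : (Fin d → E) → ℝ) := by
    refine continuous_pi fun x => ?_
    by_cases hx : ∃ e : Fin d → E, ∀ i, x i = γ (e i)
    · have heq : (fun Φ : ↥(Mt d E) => pushforward γ (Φ : (Fin d → E) → ℝ) x)
          = fun Φ : ↥(Mt d E) => (Φ : (Fin d → E) → ℝ) hx.choose := by
        funext Φ
        rw [pushforward, dif_pos hx]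
      rw [heq]
      exact (continuous_apply _).comp continuous_subtype_val
    · have heq : (fun Φ : ↥(Mt d E) => pushforward γ (Φ : (Fin d → E) → ℝ) x)
          = fun _ => 0 := by
        funext Φ
        rw [pushforward, dif_neg hx]
      rw [heq]
      exact continuous_const
  set mid : C(↥(Mt d E), ↥(MtN d)) :=
    ⟨fun Φ => ⟨pushforward γ (Φ : (Fin d → E) → ℝ), midmem Φ⟩,
      midcont.subtype_mk _⟩ with hmid
  have mkH : ∀ (δ : E → ℕ), Function.Injective δ → (∀ a b, δ a ≠ γ b) →
      ∀ f' : C(↥(Mt d E), ↥(MtN d)),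
        (∀ Φ : ↥(Mt d E), (f' Φ : (Fin d → ℕ) → ℝ)
            = pushforward δ (Φ : (Fin d → E) → ℝ)) →
        Nonempty (f'.Homotopy mid) := by
    intro δ hδ hdis f' hf'
    have hιδ := hι δ hδ hdis
    have contH : Continuous fun p : ↥unitInterval × ↥(Mt d E) =>
        Statement5Aux.mixF (Sum.elim δ γ) (p.1 : ℝ) (p.2 : (Fin d → E) → ℝ) := by
      refine continuous_pi fun x => ?_
      by_cases hx : ∀ i, ∃ z : E ⊕ E, Sum.elim δ γ z = x i
      · have heq : (fun p : ↥unitInterval × ↥(Mt d E) =>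
            Statement5Aux.mixF (Sum.elim δ γ) (p.1 : ℝ) (p.2 : (Fin d → E) → ℝ) x)
            = fun p => (p.2 : (Fin d → E) → ℝ)
                (fun i => Statement5Aux.prj ((hx i).choose)) *
              ∏ i, Statement5Aux.wgt (p.1 : ℝ) ((hx i).choose) := by
          funext p
          rw [Statement5Aux.mixF, dif_pos hx]
        rw [heq]
        refine Continuous.mul ?_ ?_
        · exact (continuous_apply _).comp (continuous_subtype_val.comp continuous_snd)
        · refine continuous_finset_prod _ fun i _ => ?_
          rcases hS : (hx i).choose with a | b
          · simp only [hS, Statement5Aux.wgt, Sum.elim_inl]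
            exact continuous_const.sub (continuous_subtype_val.comp continuous_fst)
          · simp only [hS, Statement5Aux.wgt, Sum.elim_inr]
            exact continuous_subtype_val.comp continuous_fst
      · have heq : (fun p : ↥unitInterval × ↥(Mt d E) =>
            Statement5Aux.mixF (Sum.elim δ γ) (p.1 : ℝ) (p.2 : (Fin d → E) → ℝ) x)
            = fun _ => 0 := funext fun p => Statement5Aux.mixF_neg hx
        rw [heq]
        exact continuous_const
    refine ⟨⟨⟨fun p => ⟨Statement5Aux.mixF (Sum.elim δ γ) (p.1 : ℝ)
        (p.2 : (Fin d → E) → ℝ),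
        Statement5Aux.mixF_memMtN hιδ p.1.2.1 p.1.2.2 p.2.2⟩,
        contH.subtype_mk _⟩, ?_, ?_⟩⟩
    · intro Φ
      apply Subtype.ext
      show Statement5Aux.mixF (Sum.elim δ γ) ((0 : ↥unitInterval) : ℝ)
        (Φ : (Fin d → E) → ℝ) = _
      rw [show ((0 : ↥unitInterval) : ℝ) = 0 from rfl,
        Statement5Aux.mixF_zero hδ hdis]
      exact (hf' Φ).symm
    · intro Φ
      apply Subtype.ext
      show Statement5Aux.mixF (Sum.elim δ γ) ((1 : ↥unitInterval) : ℝ)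
        (Φ : (Fin d → E) → ℝ) = _
      rw [show ((1 : ↥unitInterval) : ℝ) = 1 from rfl,
        Statement5Aux.mixF_one hγ hdis]
      rfl
  obtain ⟨H1⟩ := mkH α hα hdα f hf
  obtain ⟨H2⟩ := mkH β hβ hdβ g hg
  exact ⟨H1.trans H2.symm⟩
end

section
/- Let E be a finite set, d ≥ 1, p : binom(E,d) → {0,1}, and I an initial datum. Identify C(p,I) with a subset of ℝ^{supp(p)} (where supp(p) = {B : p(B) = 1}) by recording the finite coordinates. Then C(p,I) ⊆ ℝ^{supp(p)} is convex, invariant under translation by λ·(1,…,1) for every λ ∈ ℝ, and invariant under multiplication by every positive real scalar. -/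
open Finset

/-! ## Statement 6 -/

section Statement6Aux

variable {E : Type*} [DecidableEq E] {d : ℕ} {p : Finset E → Bool}

lemma extendFin_top_iff (f : ↥(suppSet d p) → ℝ) (B : Finset E) :
    extendFin d p f B = ⊤ ↔ B ∉ suppSet d p := by
  unfold extendFin
  split <;> simp_all

lemma extendFin_of_mem (f : ↥(suppSet d p) → ℝ) {B : Finset E} (h : B ∈ suppSet d p) :
    extendFin d p f B = ((f ⟨B, h⟩ : ℝ) : WithTop ℝ) := by
  unfold extendFin
  simp [h]

lemma IsInC_congr {I : Finset E → Finset E → Set E} {φ ψ : Finset E → WithTop ℝ}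
    (hφ : IsInC d p I φ)
    (hT : ∀ B : Finset E, ψ B = ⊤ ↔ φ B = ⊤)
    (hA : ∀ X Y : Finset E, X.card = d + 1 → Y.card = d - 1 →
      argminSet ψ X Y = argminSet φ X Y) : IsInC d p I ψ := by
  obtain ⟨⟨⟨B, hB, hBtop⟩, hTP⟩, hp, hArg⟩ := hφ
  refine ⟨⟨⟨B, hB, ?_⟩, ?_⟩, ?_, ?_⟩
  · simpa [hT B] using hBtop
  · intro X Y hX hY
    rw [hA X Y hX hY]
    exact hTP X Y hX hY
  · intro B' hB'
    rw [hp B' hB']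
    exact not_congr (hT B').symm
  · intro X Y hX hY
    rw [hA X Y hX hY]
    exact hArg X Y hX hY

lemma withtop_add_le_add_iff_right (c : ℝ) (x y : WithTop ℝ) :
    x + (c : WithTop ℝ) ≤ y + (c : WithTop ℝ) ↔ x ≤ y := by
  induction x using WithTop.recTopCoe <;> induction y using WithTop.recTopCoe <;>
    simp [← WithTop.coe_add]

lemma extendFin_add_const (f : ↥(suppSet d p) → ℝ) (lam : ℝ) (B : Finset E) :
    extendFin d p (f + lam • fun _ => (1 : ℝ)) B = extendFin d p f B + (lam : WithTop ℝ) := by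
  unfold extendFin
  split
  · rw [← WithTop.coe_add, WithTop.coe_inj]
    simp
  · simp

lemma extendFin_smul (c : ℝ) (f : ↥(suppSet d p) → ℝ) (B : Finset E) :
    extendFin d p (c • f) B = WithTop.map (fun x => c * x) (extendFin d p f B) := by
  unfold extendFin
  split <;> simp

lemma map_mul_add (c : ℝ) (x y : WithTop ℝ) :
    WithTop.map (fun t => c * t) (x + y) =
      WithTop.map (fun t => c * t) x + WithTop.map (fun t => c * t) y := by
  induction x using WithTop.recTopCoe <;> induction y using WithTop.recTopCoe <;>
    simp [← WithTop.coe_add, ← WithTop.coe_mul, mul_add]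

lemma map_mul_le_iff {c : ℝ} (hc : 0 < c) (x y : WithTop ℝ) :
    WithTop.map (fun t => c * t) x ≤ WithTop.map (fun t => c * t) y ↔ x ≤ y := by
  induction x using WithTop.recTopCoe <;> induction y using WithTop.recTopCoe <;>
    simp [← WithTop.coe_mul, WithTop.coe_le_coe, mul_le_mul_iff_right₀ hc]

lemma comb_sum (a b : ℝ) (f g : ↥(suppSet d p) → ℝ) (B1 B2 : Finset E) :
    (extendFin d p f B1 + extendFin d p f B2 = ⊤ ∧
      extendFin d p g B1 + extendFin d p g B2 = ⊤ ∧
      extendFin d p (a • f + b • g) B1 + extendFin d p (a • f + b • g) B2 = ⊤) ∨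
    ∃ x y : ℝ, extendFin d p f B1 + extendFin d p f B2 = (x : WithTop ℝ) ∧
      extendFin d p g B1 + extendFin d p g B2 = (y : WithTop ℝ) ∧
      extendFin d p (a • f + b • g) B1 + extendFin d p (a • f + b • g) B2 =
        ((a * x + b * y : ℝ) : WithTop ℝ) := by
  by_cases h1 : B1 ∈ suppSet d p
  · by_cases h2 : B2 ∈ suppSet d p
    · right
      refine ⟨f ⟨B1, h1⟩ + f ⟨B2, h2⟩, g ⟨B1, h1⟩ + g ⟨B2, h2⟩, ?_, ?_, ?_⟩ <;>
        rw [extendFin_of_mem _ h1, extendFin_of_mem _ h2, ← WithTop.coe_add, WithTop.coe_inj] <;>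
        simp <;> ring
    · left
      refine ⟨?_, ?_, ?_⟩ <;> rw [(extendFin_top_iff _ B2).mpr h2] <;> simp
  · left
    refine ⟨?_, ?_, ?_⟩ <;> rw [(extendFin_top_iff _ B1).mpr h1] <;> simp

end Statement6Aux

theorem statement6 {E : Type*} [Fintype E] [DecidableEq E] (d : ℕ) (hd : 1 ≤ d)
    (p : Finset E → Bool) (I : Finset E → Finset E → Set E)
    (hI : ∀ X Y : Finset E, I X Y ⊆ ↑(X \ Y)) :
    Convex ℝ (CRealCoords d p I) ∧
    (∀ f ∈ CRealCoords d p I, ∀ lam : ℝ,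
      f + lam • (fun _ => (1:ℝ)) ∈ CRealCoords d p I) ∧
    ∀ f ∈ CRealCoords d p I, ∀ c : ℝ, 0 < c → c • f ∈ CRealCoords d p I := by
  classical
  have hTgen : ∀ (f g : ↥(suppSet d p) → ℝ) (B : Finset E),
      extendFin d p f B = ⊤ ↔ extendFin d p g B = ⊤ := by
    intro f g B
    rw [extendFin_top_iff, extendFin_top_iff]
  refine ⟨?_, ?_, ?_⟩
  · -- Convexity
    intro f hf g hg a b ha hb hab
    rcases eq_or_lt_of_le ha with ha0 | ha
    · have ha0' : a = 0 := ha0.symm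
      subst ha0'
      have hb1 : b = 1 := by linarith
      subst hb1
      simpa using hg
    rcases eq_or_lt_of_le hb with hb0 | hb
    · have hb0' : b = 0 := hb0.symm
      subst hb0'
      have ha1 : a = 1 := by linarith
      subst ha1
      simpa using hf
    refine IsInC_congr hf (hTgen _ _) ?_
    intro X Y hX hY
    have hIf : argminSet (extendFin d p f) X Y = I X Y := hf.2.2 X Y hX hY
    have hIg : argminSet (extendFin d p g) X Y = I X Y := hg.2.2 X Y hX hY
    have hfg : argminSet (extendFin d p g) X Y = argminSet (extendFin d p f) X Y :=
      hIg.trans hIf.symm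
    obtain ⟨i0, hi0, -, -, -⟩ := hf.1.2 X Y hX hY
    have hi0g : i0 ∈ argminSet (extendFin d p g) X Y := by rw [hfg]; exact hi0
    ext i
    simp only [argminSet, Set.mem_setOf_eq]
    constructor
    · rintro ⟨hiXY, hmin⟩
      refine ⟨hiXY, ?_⟩
      by_contra hcon
      push_neg at hcon
      obtain ⟨j, hjXY, hji⟩ := hcon
      rcases comb_sum a b f g (X.erase i) (insert i Y) with ⟨hft, hgt, hht⟩ |
        ⟨xi, yi, hxf, hxg, hxh⟩
      · rcases comb_sum a b f g (X.erase i0) (insert i0 Y) with ⟨hf0t, -, -⟩ |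
          ⟨x0, y0, h0f, h0g, h0h⟩
        · have hle := hi0.2 j hjXY
          rw [hf0t, top_le_iff] at hle
          rw [hle] at hji
          exact absurd hji not_top_lt
        · have hle := hmin i0 hi0.1
          rw [hht, h0h, top_le_iff] at hle
          exact absurd hle WithTop.coe_ne_top
      · rcases comb_sum a b f g (X.erase i0) (insert i0 Y) with ⟨hf0t, -, -⟩ |
          ⟨x0, y0, h0f, h0g, h0h⟩
        · have hle := hi0.2 i hiXY
          rw [hf0t, hxf, top_le_iff] at hle
          exact absurd hle WithTop.coe_ne_top
        · have h1 : (x0 : WithTop ℝ) < (xi : WithTop ℝ) := by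
            rw [← h0f, ← hxf]
            exact lt_of_le_of_lt (hi0.2 j hjXY) hji
          have h2 : (y0 : WithTop ℝ) ≤ (yi : WithTop ℝ) := by
            rw [← h0g, ← hxg]
            exact hi0g.2 i hiXY
          have h3 : ((a * xi + b * yi : ℝ) : WithTop ℝ) ≤ ((a * x0 + b * y0 : ℝ) : WithTop ℝ) := by
            rw [← hxh, ← h0h]
            exact hmin i0 hi0.1
          rw [WithTop.coe_lt_coe] at h1
          rw [WithTop.coe_le_coe] at h2 h3
          nlinarith
    · rintro ⟨hiXY, hmin⟩
      refine ⟨hiXY, fun j hjXY => ?_⟩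
      have higm : i ∈ argminSet (extendFin d p g) X Y := by
        rw [hfg]; exact ⟨hiXY, hmin⟩
      rcases comb_sum a b f g (X.erase j) (insert j Y) with ⟨-, -, hht⟩ |
        ⟨xj, yj, hjf, hjg, hjh⟩
      · rw [hht]; exact le_top
      · rcases comb_sum a b f g (X.erase i) (insert i Y) with ⟨hft, -, -⟩ |
          ⟨xi, yi, hif, hig', hih⟩
        · have hle := hmin j hjXY
          rw [hft, hjf, top_le_iff] at hle
          exact absurd hle WithTop.coe_ne_top
        · rw [hih, hjh, WithTop.coe_le_coe]
          have h1 : xi ≤ xj := by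
            rw [← WithTop.coe_le_coe, ← hif, ← hjf]
            exact hmin j hjXY
          have h2 : yi ≤ yj := by
            rw [← WithTop.coe_le_coe, ← hig', ← hjg]
            exact higm.2 j hjXY
          nlinarith
  · -- Translation invariance
    intro f hf lam
    refine IsInC_congr hf (hTgen _ _) ?_
    intro X Y hX hY
    have key : ∀ B1 B2 : Finset E,
        extendFin d p (f + lam • fun _ => (1 : ℝ)) B1 +
          extendFin d p (f + lam • fun _ => (1 : ℝ)) B2 =
        (extendFin d p f B1 + extendFin d p f B2) + ((lam + lam : ℝ) : WithTop ℝ) := by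
      intro B1 B2
      rw [extendFin_add_const, extendFin_add_const, WithTop.coe_add]
      exact add_add_add_comm _ _ _ _
    ext i
    simp only [argminSet, Set.mem_setOf_eq]
    constructor <;> rintro ⟨hi, hmin⟩ <;> refine ⟨hi, fun j hj => ?_⟩
    · have hle := hmin j hj
      rwa [key, key, withtop_add_le_add_iff_right] at hle
    · rw [key, key, withtop_add_le_add_iff_right]
      exact hmin j hj
  · -- Positive scaling invariance
    intro f hf c hc
    refine IsInC_congr hf (hTgen _ _) ?_
    intro X Y hX hY
    have key : ∀ B1 B2 : Finset E,
        extendFin d p (c • f) B1 + extendFin d p (c • f) B2 =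
        WithTop.map (fun t => c * t) (extendFin d p f B1 + extendFin d p f B2) := by
      intro B1 B2
      rw [extendFin_smul, extendFin_smul, map_mul_add]
    ext i
    simp only [argminSet, Set.mem_setOf_eq]
    constructor <;> rintro ⟨hi, hmin⟩ <;> refine ⟨hi, fun j hj => ?_⟩
    · have hle := hmin j hj
      rwa [key, key, map_mul_le_iff hc] at hle
    · rw [key, key, map_mul_le_iff hc]
      exact hmin j hj
end
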